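/- arXiv:1309.0686 — 2 statements merged into one kernel-verified Lean document; each statement's English description precedes it below -/
import Mathlib

section
/- Let p : E → G be a surjective group homomorphism with kernel K, and suppose the extension 1 → K → E → G → 1 abelianizes well, i.e., the image of the commutator subgroup [K,K] under the inclusion K → E equals K ∩ [E,E] (equivalently, 0 → K_ab → E_ab → G_ab → 0 is exact). Then for every group homomorphism f : H → G, the pullback extension also abelianizes well: letting P = {(e,h) ∈ E × H : p(e) = f(h)} with projection π : P → H (surjective with kernel K' = {(k,1) : k ∈ K}), the image of [K',K'] under the inclusion K' → P equals K' ∩ [P,P]. In other words, abelianization is conditionally flat. -/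
/-- The pullback (fiber product) of two homomorphisms `p : E →* G` and `f : H →* G`,
as a subgroup of `E × H`. -/
def pullbackSubgroup {E H G : Type*} [Group E] [Group H] [Group G]
    (p : E →* G) (f : H →* G) : Subgroup (E × H) where
  carrier := {q : E × H | p q.1 = f q.2}
  one_mem' := by simp
  mul_mem' := by
    intro a b ha hb
    simp only [Set.mem_setOf_eq, Prod.fst_mul, Prod.snd_mul, map_mul] at *
    rw [ha, hb]
  inv_mem' := by
    intro a ha
    simp only [Set.mem_setOf_eq, Prod.fst_inv, Prod.snd_inv, map_inv] at *
    rw [ha]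

/-- The projection from the pullback of `p : E →* G` along `f : H →* G` to `H`. -/
def pullbackProj {E H G : Type*} [Group E] [Group H] [Group G]
    (p : E →* G) (f : H →* G) : ↥(pullbackSubgroup p f) →* H :=
  (MonoidHom.snd E H).comp (pullbackSubgroup p f).subtype

def pullbackKerHom {E H G : Type*} [Group E] [Group H] [Group G]
    (p : E →* G) (f : H →* G) :
    ↥(MonoidHom.ker p) →* ↥(MonoidHom.ker (pullbackProj p f)) where
  toFun k := ⟨⟨((k : E), 1), by
      simpa [pullbackSubgroup] using MonoidHom.mem_ker.mp k.2⟩, by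
      simp [MonoidHom.mem_ker, pullbackProj]⟩
  map_one' := by ext <;> simp
  map_mul' a b := by ext <;> simp

/-- If a group extension `1 → K → E → G → 1` abelianizes well, i.e. the image of `[K,K]`
in `E` equals `K ⊓ [E,E]`, then the pullback extension along any homomorphism `f : H →* G`
also abelianizes well: abelianization is conditionally flat. -/
theorem abelianization_conditionally_flat
    {E G H : Type*} [Group E] [Group G] [Group H]
    (p : E →* G) (hp : Function.Surjective p)
    (hflat : (commutator ↥(MonoidHom.ker p)).map (MonoidHom.ker p).subtype =
      MonoidHom.ker p ⊓ commutator E)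
    (f : H →* G) :
    (commutator ↥(MonoidHom.ker (pullbackProj p f))).map
        (MonoidHom.ker (pullbackProj p f)).subtype =
      MonoidHom.ker (pullbackProj p f) ⊓ commutator ↥(pullbackSubgroup p f) := by
  set N := MonoidHom.ker (pullbackProj p f) with hN
  apply le_antisymm
  · rw [commutator_def, Subgroup.map_commutator]
    rw [← MonoidHom.range_eq_map, Subgroup.range_subtype]
    refine le_inf ?_ (Subgroup.commutator_mono le_top le_top)
    rw [Subgroup.commutator_le]
    intro g1 h1 g2 h2
    exact mul_mem (mul_mem (mul_mem h1 h2) (inv_mem h1)) (inv_mem h2)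
  · rintro x ⟨hxN, hxC⟩
    set φ : ↥(pullbackSubgroup p f) →* E :=
      (MonoidHom.fst E H).comp (pullbackSubgroup p f).subtype with hφ
    have he : φ x ∈ MonoidHom.ker p ⊓ commutator E := by
      constructor
      · have h2 : (x : E × H).2 = 1 := hxN
        have : p (x : E × H).1 = f (x : E × H).2 := x.2
        simp [MonoidHom.mem_ker, φ, this, h2]
      · have : (commutator ↥(pullbackSubgroup p f)).map φ ≤ commutator E := by
          rw [commutator_def, Subgroup.map_commutator]
          exact Subgroup.commutator_mono le_top le_top
        exact this (Subgroup.mem_map_of_mem φ hxC)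
    rw [← hflat] at he
    obtain ⟨c, hc, hce⟩ := he
    refine ⟨pullbackKerHom p f c, ?_, ?_⟩
    · have : (commutator ↥(MonoidHom.ker p)).map (pullbackKerHom p f) ≤ commutator ↥N := by
        rw [commutator_def, Subgroup.map_commutator]
        exact Subgroup.commutator_mono le_top le_top
      exact this (Subgroup.mem_map_of_mem _ hc)
    · have h2 : (x : E × H).2 = 1 := hxN
      ext
      · simpa [pullbackKerHom, φ] using hce
      · simp [pullbackKerHom, h2]
end

section
/- Let F be a functor from the category of groups to itself which is right exact, meaning: for every surjective group homomorphism p : E → G with kernel inclusion i : K → E, the homomorphism F(p) : F(E) → F(G) is surjective and its kernel equals the range of F(i) : F(K) → F(E). Then F is conditionally flat: if an extension 1 → K → E → G → 1 is F-flat (i.e., additionally F(i) is injective, so that 1 → F(K) → F(E) → F(G) → 1 is a group extension), then for every group homomorphism f : H → G the pullback extension 1 → K' → P → H → 1, where P = {(e,h) ∈ E × H : p(e) = f(h)} with projection to H and kernel K' = {(k,1) : k ∈ K}, is also F-flat. -/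
open CategoryTheory

universe u

/-- The inclusion of the kernel of a morphism of groups, as a morphism in `Grp`. -/
def kerIncl {E G : GrpCat.{u}} (p : E ⟶ G) : GrpCat.of ↥(MonoidHom.ker p.hom) ⟶ E :=
  GrpCat.ofHom (MonoidHom.ker p.hom).subtype

/-- The projection of the pullback of `p : E ⟶ G` along `f : H ⟶ G`, as a morphism
in `Grp`. -/
def pbHom {E H G : GrpCat.{u}} (p : E ⟶ G) (f : H ⟶ G) :
    GrpCat.of ↥(pullbackSubgroup p.hom f.hom) ⟶ H :=
  GrpCat.ofHom (pullbackProj p.hom f.hom)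

/-- An extension `1 → ker p → E → G → 1` is `F`-flat for a functor `F : Grp ⥤ Grp` if
applying `F` to the kernel inclusion and to `p` yields again a group extension:
`F` of the kernel inclusion is injective, `F p` is surjective, and the image of the former
is the kernel of the latter. -/
def GrpFlat (F : GrpCat.{u} ⥤ GrpCat.{u}) {E G : GrpCat.{u}} (p : E ⟶ G) : Prop :=
  Function.Injective (F.map (kerIncl p)).hom ∧
  Function.Surjective (F.map p).hom ∧
  MonoidHom.range (F.map (kerIncl p)).hom = MonoidHom.ker (F.map p).hom

/-- A functor `F : Grp ⥤ Grp` is right exact if, for every surjective `p : E ⟶ G` with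
kernel inclusion `i`, the morphism `F p` is surjective and its kernel is the range
of `F i`. -/
def GrpRightExact (F : GrpCat.{u} ⥤ GrpCat.{u}) : Prop :=
  ∀ (E G : GrpCat.{u}) (p : E ⟶ G), Function.Surjective p.hom →
    Function.Surjective (F.map p).hom ∧
    MonoidHom.range (F.map (kerIncl p)).hom = MonoidHom.ker (F.map p).hom

/-- A right exact functor on the category of groups is conditionally flat: every pullback
of an `F`-flat extension is again `F`-flat. -/
theorem rightExact_conditionally_flat (F : GrpCat.{u} ⥤ GrpCat.{u}) (hF : GrpRightExact F)
    {E G : GrpCat.{u}} (p : E ⟶ G) (hp : Function.Surjective p.hom) (hflat : GrpFlat F p)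
    {H : GrpCat.{u}} (f : H ⟶ G) :
    GrpFlat F (pbHom p f) := by
  have hqs : Function.Surjective (pbHom p f).hom := by
    intro h
    obtain ⟨e, he⟩ := hp (f.hom h)
    exact ⟨⟨(e, h), he⟩, rfl⟩
  obtain ⟨hsurj, hker⟩ := hF _ _ (pbHom p f) hqs
  refine ⟨?_, hsurj, hker⟩
  -- the first projection from the pullback
  let π₁ : GrpCat.of ↥(pullbackSubgroup p.hom f.hom) ⟶ E :=
    GrpCat.ofHom ((MonoidHom.fst E H).comp (pullbackSubgroup p.hom f.hom).subtype)
  -- the kernel of the pullback projection is isomorphic to ker p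
  have mem1 : ∀ x : ↥(MonoidHom.ker (pbHom p f).hom), (x.1.1.2 : H) = 1 := fun x => x.2
  let e : ↥(MonoidHom.ker (pbHom p f).hom) ≃* ↥(MonoidHom.ker p.hom) :=
  { toFun := fun x => ⟨x.1.1.1, by
      have h1 : p.hom x.1.1.1 = f.hom x.1.1.2 := x.1.2
      have h2 : (x.1.1.2 : H) = 1 := x.2
      simp [MonoidHom.mem_ker, h1, h2]⟩
    invFun := fun k => ⟨⟨(k.1, 1), by
      show p.hom k.1 = f.hom 1
      rw [map_one]
      exact k.2⟩, rfl⟩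
    left_inv := fun x => Subtype.ext (Subtype.ext (Prod.ext rfl (x.2 : (x.1.1.2 : H) = 1).symm))
    right_inv := fun k => rfl
    map_mul' := fun a b => rfl }
  have hsq : kerIncl (pbHom p f) ≫ π₁ = (GrpCat.ofHom e.toMonoidHom : GrpCat.of ↥(MonoidHom.ker (pbHom p f).hom) ⟶ GrpCat.of ↥(MonoidHom.ker p.hom)) ≫ kerIncl p := by
    ext x
    rfl
  let i : GrpCat.of ↥(MonoidHom.ker (pbHom p f).hom) ≅ GrpCat.of ↥(MonoidHom.ker p.hom) :=
    @MulEquiv.toGrpIso (GrpCat.of ↥(MonoidHom.ker (pbHom p f).hom)) (GrpCat.of ↥(MonoidHom.ker p.hom)) e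
  have hiso : F.map i.hom ≫ F.map i.inv = 𝟙 _ := by
    rw [← F.map_comp, i.hom_inv_id, F.map_id]
  have h1 : Function.Injective (F.map i.hom).hom := by
    apply Function.LeftInverse.injective (g := (F.map i.inv).hom)
    intro x
    have := congrArg (fun m : F.obj _ ⟶ F.obj _ => m.hom x) hiso
    exact this
  have h2 : Function.Injective (F.map (kerIncl p)).hom := hflat.1
  have hcomp : Function.Injective ((F.map π₁).hom ∘ (F.map (kerIncl (pbHom p f))).hom) := by
    rw [← MonoidHom.coe_comp, ← GrpCat.hom_comp, ← F.map_comp, hsq, F.map_comp]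
    exact h2.comp h1
  exact Function.Injective.of_comp hcomp
end
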